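/- arXiv:2002.00329 — 4 statements merged into one kernel-verified Lean document; each statement's English description precedes it below -/
import Mathlib

section
/- Suppose the mixture of k spherical Gaussians satisfies ‖μ_i* − μ_j*‖ ≥ C (σ_i* ∨ σ_j*) √(log k + log(ρ_σ ρ_π)) for all i ≠ j, for a sufficiently large universal constant C ≥ 64. Then for each q ∈ {0, 1, 2}, Σ_{j≠1} (π_1* + π_j*) (R_{j1}*)^q exp(−(R_{j1}*)²/(64 (σ_1* ∨ σ_j*)²)) ≤ c_q (σ_1*)^q π_1*, where c_0, c_1, c_2 are absolute constants that can be made arbitrarily small by choosing the separation constant C large enough. -/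
open MeasureTheory Real
open scoped BigOperators ENNReal ProbabilityTheory RealInnerProductSpace

/-- The spherical Gaussian measure `N(μ, σ² I_d)` on `ℝ^d`, given by its density
with respect to Lebesgue measure. -/
noncomputable def sphericalGaussian (d : ℕ) (μ : EuclideanSpace ℝ (Fin d)) (σ : ℝ) :
    Measure (EuclideanSpace ℝ (Fin d)) :=
  volume.withDensity fun x =>
    ENNReal.ofReal ((2 * Real.pi * σ ^ 2) ^ (-(d : ℝ) / 2) *
      Real.exp (-‖x - μ‖ ^ 2 / (2 * σ ^ 2)))

/-- The mixture of `k` spherical Gaussians with mixing weights `p`, means `μ`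
and scale factors `σ`. -/
noncomputable def mixture (d k : ℕ) (p : Fin k → ℝ)
    (μ : Fin k → EuclideanSpace ℝ (Fin d)) (σ : Fin k → ℝ) :
    Measure (EuclideanSpace ℝ (Fin d)) :=
  ∑ j : Fin k, ENNReal.ofReal (p j) • sphericalGaussian d (μ j) (σ j)

/-- The EM E-step weight `w_i(x)` for parameters `(p, μ, v)`, where `v i` is the
*variance* (i.e. `σ_i²`) of the `i`-th component. -/
noncomputable def emWeight (d k : ℕ) (p : Fin k → ℝ)
    (μ : Fin k → EuclideanSpace ℝ (Fin d)) (v : Fin k → ℝ) (i : Fin k)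
    (x : EuclideanSpace ℝ (Fin d)) : ℝ :=
  p i * Real.exp (-‖x - μ i‖ ^ 2 / (2 * v i) - (d : ℝ) * Real.log (v i) / 2) /
    ∑ j : Fin k, p j * Real.exp (-‖x - μ j‖ ^ 2 / (2 * v j) - (d : ℝ) * Real.log (v j) / 2)

/-- Maximum of finitely many reals (as an indexed supremum). -/
noncomputable def finSup {k : ℕ} (f : Fin k → ℝ) : ℝ := ⨆ i, f i

/-- Minimum of finitely many reals (as an indexed infimum). -/
noncomputable def finInf {k : ℕ} (f : Fin k → ℝ) : ℝ := ⨅ i, f i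

private lemma key_scalar (q : ℕ) (hq : q ≤ 2) (A t : ℝ) (hA : 0 ≤ A) (ht : A ≤ t) :
    t ^ q * Real.exp (-t ^ 2 / 64) ≤ 129 * Real.exp (-A ^ 2 / 128) := by
  have ht0 : 0 ≤ t := hA.trans ht
  have h1 : t ^ q ≤ 1 + t ^ 2 := by
    interval_cases q <;> nlinarith [sq_nonneg t, sq_nonneg (t - 1)]
  have h2 : (1 + t ^ 2) * Real.exp (-t ^ 2 / 128) ≤ 129 := by
    have he : t ^ 2 / 128 + 1 ≤ Real.exp (t ^ 2 / 128) := Real.add_one_le_exp _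
    have hexp : 1 + t ^ 2 ≤ 129 * Real.exp (t ^ 2 / 128) := by
      nlinarith [Real.exp_pos (t ^ 2 / 128)]
    calc (1 + t ^ 2) * Real.exp (-t ^ 2 / 128)
        ≤ (129 * Real.exp (t ^ 2 / 128)) * Real.exp (-t ^ 2 / 128) :=
          mul_le_mul_of_nonneg_right hexp (Real.exp_pos _).le
      _ = 129 := by
          rw [mul_assoc, ← Real.exp_add]
          have : t ^ 2 / 128 + -t ^ 2 / 128 = 0 := by ring
          rw [this, Real.exp_zero, mul_one]
  have h3 : Real.exp (-t ^ 2 / 128) ≤ Real.exp (-A ^ 2 / 128) := by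
    apply Real.exp_le_exp.mpr
    nlinarith [pow_le_pow_left₀ hA ht 2]
  calc t ^ q * Real.exp (-t ^ 2 / 64)
      ≤ (1 + t ^ 2) * Real.exp (-t ^ 2 / 64) :=
        mul_le_mul_of_nonneg_right h1 (Real.exp_pos _).le
    _ = ((1 + t ^ 2) * Real.exp (-t ^ 2 / 128)) * Real.exp (-t ^ 2 / 128) := by
        rw [mul_assoc, ← Real.exp_add]; congr 1; ring
    _ ≤ 129 * Real.exp (-A ^ 2 / 128) :=
        mul_le_mul h2 h3 (Real.exp_pos _).le (by norm_num)

set_option maxHeartbeats 1000000 in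
/-- **Lemma: summed weight-error bounds under separation.**
Under the separation `‖μ_i* − μ_j*‖ ≥ C (σ_i* ∨ σ_j*) √(log k + log(ρ_σ ρ_π))` for all
`i ≠ j` (with a large enough universal constant `C ≥ 64`), for each `q ∈ {0,1,2}` the sum
`Σ_{j≠1} (π_1* + π_j*) (R_{j1}*)^q exp(−(R_{j1}*)²/(64 (σ_1* ∨ σ_j*)²))` is at most
`c_q (σ_1*)^q π_1*`, where the constants `c_q` can be made arbitrarily small by taking the
separation constant `C` large enough. -/
theorem sum_weight_error_bounds (cq : ℝ) (hcq : 0 < cq) :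
    ∃ C : ℝ, 64 ≤ C ∧
    ∀ (d k : ℕ), 1 ≤ d → 2 ≤ k →
    ∀ (ps : Fin k → ℝ) (μs : Fin k → EuclideanSpace ℝ (Fin d)) (σs : Fin k → ℝ),
    (∀ i, 0 < ps i) → (∑ i, ps i = 1) → (∀ i, 0 < σs i) →
    (∀ i j, i ≠ j →
      C * max (σs i) (σs j) *
          Real.sqrt (Real.log k + Real.log (finSup σs / finInf σs * (finSup ps / finInf ps)))
        ≤ ‖μs i - μs j‖) →
    ∀ one : Fin k, (one : ℕ) = 0 →
    ∀ q ∈ ({0, 1, 2} : Finset ℕ),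
      ∑ j ∈ Finset.univ.erase one,
          (ps one + ps j) * ‖μs j - μs one‖ ^ q *
            Real.exp (-‖μs j - μs one‖ ^ 2 / (64 * max (σs one) (σs j) ^ 2))
        ≤ cq * σs one ^ q * ps one := by
  have habs : 0 ≤ |Real.log (258 / cq)| := abs_nonneg _
  refine ⟨max 64 (512 * (1 + |Real.log (258 / cq)|)), le_max_left _ _, ?_⟩
  set C : ℝ := max 64 (512 * (1 + |Real.log (258 / cq)|)) with hCdef
  have hC512 : 512 * (1 + |Real.log (258 / cq)|) ≤ C := le_max_right _ _
  have hC512' : (512 : ℝ) ≤ C := by nlinarith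
  have hC0 : (0 : ℝ) < C := by linarith
  intro d k hd hk ps μs σs hps hsum hσs hsep one hone q hq
  have hq2 : q ≤ 2 := by
    simp only [Finset.mem_insert, Finset.mem_singleton] at hq
    rcases hq with h | h | h <;> omega
  haveI : Nonempty (Fin k) := ⟨⟨0, by omega⟩⟩
  set Sσ := finSup σs with hSσdef
  set Iσ := finInf σs with hIσdef
  set Sp := finSup ps with hSpdef
  set Ip := finInf ps with hIpdef
  have hIσ : 0 < Iσ := by
    obtain ⟨i, hi⟩ := exists_eq_ciInf_of_finite (f := σs)
    rw [hIσdef, finInf, ← hi]; exact hσs i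
  have hIp : 0 < Ip := by
    obtain ⟨i, hi⟩ := exists_eq_ciInf_of_finite (f := ps)
    rw [hIpdef, finInf, ← hi]; exact hps i
  have hleSσ : ∀ i, σs i ≤ Sσ := fun i => le_ciSup (Set.finite_range σs).bddAbove i
  have hIleσ : ∀ i, Iσ ≤ σs i := fun i => ciInf_le (Set.finite_range σs).bddBelow i
  have hleSp : ∀ i, ps i ≤ Sp := fun i => le_ciSup (Set.finite_range ps).bddAbove i
  have hIlep : ∀ i, Ip ≤ ps i := fun i => ciInf_le (Set.finite_range ps).bddBelow i
  have hρσ : (1 : ℝ) ≤ Sσ / Iσ := (one_le_div hIσ).2 ((hIleσ one).trans (hleSσ one))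
  have hρπ : (1 : ℝ) ≤ Sp / Ip := (one_le_div hIp).2 ((hIlep one).trans (hleSp one))
  set ρ := Sσ / Iσ * (Sp / Ip) with hρdef
  have hρ1 : (1 : ℝ) ≤ ρ := le_trans hρσ (le_mul_of_one_le_right (by linarith) hρπ)
  set L := Real.log (k : ℝ) + Real.log ρ with hLdef
  have hlogk2 : Real.log 2 ≤ Real.log (k : ℝ) := by
    apply Real.log_le_log (by norm_num)
    exact_mod_cast hk
  have hlogρ : 0 ≤ Real.log ρ := Real.log_nonneg hρ1
  have hLhalf : (1 / 2 : ℝ) ≤ L := by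
    have := Real.log_two_gt_d9
    rw [hLdef]; linarith
  have hL0 : 0 < L := by linarith
  set σ1 := σs one with hσ1def
  set π1 := ps one with hπ1def
  have hσ1 : 0 < σ1 := hσs one
  have hπ1 : 0 < π1 := hps one
  set T : ℝ := 2 * (Sp / Ip) * π1 *
      ((Sσ / Iσ) ^ 2 * σ1 ^ q * (129 * Real.exp (-(C ^ 2 * L) / 128))) with hTdef
  have hterm : ∀ j ∈ Finset.univ.erase one,
      (π1 + ps j) * ‖μs j - μs one‖ ^ q *
          Real.exp (-‖μs j - μs one‖ ^ 2 / (64 * max σ1 (σs j) ^ 2)) ≤ T := by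
    intro j hj
    have hjone : j ≠ one := Finset.ne_of_mem_erase hj
    set R := ‖μs j - μs one‖ with hRdef
    set s := max σ1 (σs j) with hsdef
    have hs0 : 0 < s := lt_max_of_lt_left hσ1
    have hsepj : C * s * Real.sqrt L ≤ R := by
      have h := hsep one j (Ne.symm hjone)
      rwa [norm_sub_rev] at h
    set t := R / s with htdef
    have hts : R = t * s := (div_mul_cancel₀ R hs0.ne').symm
    have hA : 0 ≤ C * Real.sqrt L := by positivity
    have htA : C * Real.sqrt L ≤ t := by
      rw [htdef, le_div_iff₀ hs0]
      calc C * Real.sqrt L * s = C * s * Real.sqrt L := by ring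
        _ ≤ R := hsepj
    have ht0 : 0 ≤ t := hA.trans htA
    have hexp_eq : -R ^ 2 / (64 * s ^ 2) = -t ^ 2 / 64 := by
      rw [htdef, div_pow, neg_div, neg_div, div_div]
      ring_nf
    have hkey := key_scalar q hq2 (C * Real.sqrt L) t hA htA
    have hA2 : (C * Real.sqrt L) ^ 2 = C ^ 2 * L := by
      rw [mul_pow, Real.sq_sqrt hL0.le]
    rw [hA2] at hkey
    have hsσ : s ≤ Sσ / Iσ * σ1 := by
      calc s ≤ Sσ := max_le (hleSσ one) (hleSσ j)
        _ = Sσ / Iσ * Iσ := (div_mul_cancel₀ _ hIσ.ne').symm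
        _ ≤ Sσ / Iσ * σ1 :=
            mul_le_mul_of_nonneg_left (hIleσ one) (by positivity)
    have hsq : s ^ q ≤ (Sσ / Iσ) ^ 2 * σ1 ^ q := by
      calc s ^ q ≤ (Sσ / Iσ * σ1) ^ q := pow_le_pow_left₀ hs0.le hsσ q
        _ = (Sσ / Iσ) ^ q * σ1 ^ q := mul_pow _ _ _
        _ ≤ (Sσ / Iσ) ^ 2 * σ1 ^ q :=
            mul_le_mul_of_nonneg_right (pow_le_pow_right₀ hρσ hq2)
              (pow_nonneg hσ1.le q)
    have hπ : π1 + ps j ≤ 2 * (Sp / Ip) * π1 := by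
      have h1 : ps j ≤ Sp / Ip * π1 := by
        calc ps j ≤ Sp := hleSp j
          _ = Sp / Ip * Ip := (div_mul_cancel₀ _ hIp.ne').symm
          _ ≤ Sp / Ip * π1 :=
              mul_le_mul_of_nonneg_left (hIlep one) (by positivity)
      have h2 : π1 ≤ Sp / Ip * π1 := le_mul_of_one_le_left hπ1.le hρπ
      linarith
    calc (π1 + ps j) * R ^ q * Real.exp (-R ^ 2 / (64 * s ^ 2))
        = (π1 + ps j) * (s ^ q * (t ^ q * Real.exp (-t ^ 2 / 64))) := by
          rw [hexp_eq, hts, mul_pow]; ring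
      _ ≤ (2 * (Sp / Ip) * π1) *
            ((Sσ / Iσ) ^ 2 * σ1 ^ q * (129 * Real.exp (-(C ^ 2 * L) / 128))) := by
          apply mul_le_mul hπ
          · exact mul_le_mul hsq hkey
              (mul_nonneg (pow_nonneg ht0 q) (Real.exp_pos _).le)
              (mul_nonneg (pow_nonneg (by positivity) 2) (pow_nonneg hσ1.le q))
          · exact mul_nonneg (pow_nonneg hs0.le q)
              (mul_nonneg (pow_nonneg ht0 q) (Real.exp_pos _).le)
          · positivity
      _ = T := by rw [hTdef]
  have hT0 : 0 ≤ T := by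
    rw [hTdef]
    have h1 : (0:ℝ) ≤ Sp / Ip := by positivity
    have h2 : (0:ℝ) ≤ Sσ / Iσ := by positivity
    positivity
  have hcard : (((Finset.univ : Finset (Fin k)).erase one).card : ℝ) ≤ (k : ℝ) := by
    have h := Finset.card_erase_le (a := one) (s := (Finset.univ : Finset (Fin k)))
    have h2 : (Finset.univ : Finset (Fin k)).card = k := by simp
    exact_mod_cast h.trans_eq h2
  -- main numeric bound
  have hk0 : (0 : ℝ) < k := by positivity
  have hSpIp : (0:ℝ) < Sp / Ip := lt_of_lt_of_le one_pos hρπ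
  have hSσIσ : (0:ℝ) < Sσ / Iσ := lt_of_lt_of_le one_pos hρσ
  have hP : (k : ℝ) * ((Sp / Ip) * (Sσ / Iσ) ^ 2) ≤ Real.exp (2 * L) := by
    have ha : Real.exp (Real.log (k : ℝ)) = (k : ℝ) := Real.exp_log hk0
    have hb : Real.exp (Real.log (Sp / Ip)) = Sp / Ip := Real.exp_log hSpIp
    have hc : Real.exp (Real.log (Sσ / Iσ)) = Sσ / Iσ := Real.exp_log hSσIσ
    have hprod : (k : ℝ) * ((Sp / Ip) * (Sσ / Iσ) ^ 2) =
        Real.exp (Real.log (k : ℝ) + (Real.log (Sp / Ip) +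
          (Real.log (Sσ / Iσ) + Real.log (Sσ / Iσ)))) := by
      rw [Real.exp_add, Real.exp_add, Real.exp_add, ha, hb, hc]; ring
    rw [hprod]
    apply Real.exp_le_exp.mpr
    have hlogρeq : Real.log ρ = Real.log (Sσ / Iσ) + Real.log (Sp / Ip) := by
      rw [hρdef]; exact Real.log_mul hSσIσ.ne' hSpIp.ne'
    have hlσ : 0 ≤ Real.log (Sσ / Iσ) := Real.log_nonneg hρσ
    have hlπ : 0 ≤ Real.log (Sp / Ip) := Real.log_nonneg hρπ
    have hlk : 0 ≤ Real.log (k : ℝ) := by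
      have := Real.log_two_gt_d9; linarith
    rw [hLdef, hlogρeq]; linarith
  have hexple : Real.exp (2 * L + -(C ^ 2 * L) / 128) ≤ cq / 258 := by
    have hM0 : (0:ℝ) ≤ C ^ 2 / 128 - 2 := by nlinarith
    have h3 : 2 * L + -(C ^ 2 * L) / 128 ≤ -(C ^ 2 / 512) := by
      have hmm : (1/2 : ℝ) * (C ^ 2 / 128 - 2) ≤ L * (C ^ 2 / 128 - 2) :=
        mul_le_mul_of_nonneg_right hLhalf hM0
      nlinarith
    have h4 : Real.log (258 / cq) ≤ C ^ 2 / 512 := by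
      have h5 := le_abs_self (Real.log (258 / cq))
      nlinarith
    calc Real.exp (2 * L + -(C ^ 2 * L) / 128)
        ≤ Real.exp (-Real.log (258 / cq)) := Real.exp_le_exp.mpr (by linarith)
      _ = cq / 258 := by
          rw [Real.exp_neg, Real.exp_log (by positivity), inv_div]
  have hfinal : (k : ℝ) * T ≤ cq * σ1 ^ q * π1 := by
    have hS0 : 0 ≤ σ1 ^ q * π1 := mul_nonneg (pow_nonneg hσ1.le q) hπ1.le
    calc (k : ℝ) * T
        = 258 * ((k : ℝ) * ((Sp / Ip) * (Sσ / Iσ) ^ 2)) *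
            Real.exp (-(C ^ 2 * L) / 128) * (σ1 ^ q * π1) := by rw [hTdef]; ring
      _ ≤ 258 * Real.exp (2 * L) * Real.exp (-(C ^ 2 * L) / 128) * (σ1 ^ q * π1) := by
          apply mul_le_mul_of_nonneg_right _ hS0
          apply mul_le_mul_of_nonneg_right _ (Real.exp_pos _).le
          exact mul_le_mul_of_nonneg_left hP (by norm_num)
      _ = 258 * Real.exp (2 * L + -(C ^ 2 * L) / 128) * (σ1 ^ q * π1) := by
          rw [mul_assoc (258 : ℝ), ← Real.exp_add]
      _ ≤ 258 * (cq / 258) * (σ1 ^ q * π1) := by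
          apply mul_le_mul_of_nonneg_right _ hS0
          exact mul_le_mul_of_nonneg_left hexple (by norm_num)
      _ = cq * σ1 ^ q * π1 := by field_simp
  calc ∑ j ∈ Finset.univ.erase one,
        (π1 + ps j) * ‖μs j - μs one‖ ^ q *
          Real.exp (-‖μs j - μs one‖ ^ 2 / (64 * max σ1 (σs j) ^ 2))
      ≤ ((Finset.univ.erase one).card : ℕ) • T :=
        Finset.sum_le_card_nsmul _ _ _ hterm
    _ = ((Finset.univ.erase one).card : ℝ) * T := nsmul_eq_mul _ _
    _ ≤ (k : ℝ) * T := mul_le_mul_of_nonneg_right hcard hT0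
    _ ≤ cq * σ1 ^ q * π1 := hfinal
end

section
/- Let X be a random vector in R^d, let A ⊆ R^d be a measurable set with p = P(X ∈ A) > 0, let Y have the distribution of X conditioned on {X ∈ A}, and let Z = 1_{X ∈ A}. Let (X_i)_{i=1}^n be i.i.d. copies of X, set Z_i = 1_{X_i ∈ A}, and let (Y_i)_{i=1}^n be i.i.d. copies of Y. Then for every integer 0 ≤ n_e ≤ n and all t_1, t_2 ≥ 0 with t = t_1 + t_2: P( ‖(1/n) Σ_{i=1}^n X_i 1_{X_i ∈ A} − E[X 1_{X ∈ A}]‖ ≥ t ) ≤ max_{m ≤ n_e} P( (1/n) ‖Σ_{i=1}^m (Y_i − E[Y])‖ ≥ t_1 ) + P( ‖E[Y]‖ · |(1/n) Σ_{i=1}^n Z_i − p| ≥ t_2 ) + P( Σ_{i=1}^n Z_i ≥ n_e + 1 ). -/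
open MeasureTheory Real
open scoped BigOperators ENNReal ProbabilityTheory RealInnerProductSpace

section aux
open Set
variable {G : Type} [MeasurableSpace G]

lemma aux_map_pi_of_iIndep {Om : Type} [MeasurableSpace Om] (P : Measure Om)
    [IsProbabilityMeasure P] {n : ℕ} (X : Fin n → Om → G) (hmeas : ∀ i, Measurable (X i))
    (hind : ProbabilityTheory.iIndepFun (m := fun _ : Fin n => ‹MeasurableSpace G›) X P) :
    Measure.map (fun ω i => X i ω) P = Measure.pi (fun i => Measure.map (X i) P) := by
  haveI : ∀ i, IsProbabilityMeasure (Measure.map (X i) P) :=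
    fun i => Measure.isProbabilityMeasure_map (hmeas i).aemeasurable
  refine (Measure.pi_eq fun s hs => ?_).symm
  rw [Measure.map_apply (measurable_pi_lambda _ fun i => hmeas i) (MeasurableSet.univ_pi hs)]
  have hpre : (fun ω i => X i ω) ⁻¹' Set.pi Set.univ s = ⋂ i ∈ Finset.univ, X i ⁻¹' s i := by
    ext ω; simp [Set.mem_pi]
  rw [hpre, hind.measure_inter_preimage_eq_mul Finset.univ (fun i _ => hs i)]
  exact Finset.prod_congr rfl fun i _ => (Measure.map_apply (hmeas i) (hs i)).symm

lemma aux_pi_smul {ι : Type} {F : Fintype ι} (ν : Measure G) [IsFiniteMeasure ν]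
    (c : ℝ≥0∞) (hc : c ≠ ⊤) :
    Measure.pi (fun _ : ι => c • ν) = c ^ Fintype.card ι • Measure.pi (fun _ : ι => ν) := by
  haveI : IsFiniteMeasure (c • ν) :=
    ⟨by simp [lt_top_iff_ne_top, ENNReal.mul_ne_top hc (measure_ne_top ν _)]⟩
  refine Measure.pi_eq fun s hs => ?_
  simp only [Measure.smul_apply, smul_eq_mul, Measure.pi_pi]
  rw [Finset.prod_mul_distrib, Finset.prod_const, Finset.card_univ]

lemma aux_pi_restrict {ι : Type} {F : Fintype ι} (μ : Measure G) [IsFiniteMeasure μ]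
    {A : Set G} (hA : MeasurableSet A) :
    Measure.pi (fun _ : ι => μ.restrict A) =
      (Measure.pi fun _ : ι => μ).restrict (Set.pi Set.univ fun _ => A) := by
  refine Measure.pi_eq fun s hs => ?_
  rw [Measure.restrict_apply (MeasurableSet.univ_pi hs), ← Set.pi_inter_distrib,
    Measure.pi_pi]
  exact Finset.prod_congr rfl fun i _ => (Measure.restrict_apply (hs i)).symm

lemma aux_card_subtype {α : Type} [Fintype α] (S : Finset α)
    (inst : Fintype {x // x ∈ S}) : @Fintype.card _ inst = S.card := by
  rw [Subsingleton.elim inst inferInstance]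
  exact Fintype.card_coe S

lemma aux_card_subtype_compl {α : Type} [Fintype α] (S : Finset α)
    (inst : Fintype {x // ¬ x ∈ S}) : @Fintype.card _ inst = Fintype.card α - S.card := by
  rw [Subsingleton.elim inst inferInstance]
  rw [Fintype.card_subtype_compl, Fintype.card_coe]

lemma aux_pi_subtype {n : ℕ} (ν : Measure G) [IsProbabilityMeasure ν]
    (S : Finset (Fin n)) (W : Set ({i : Fin n // i ∈ S} → G)) (hW : MeasurableSet W) :
    (Measure.pi fun _ : Fin n => ν) {x | (fun i : {i : Fin n // i ∈ S} => x i) ∈ W} =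
      (Measure.pi fun _ : {i : Fin n // i ∈ S} => ν) W := by
  have hmp := measurePreserving_piEquivPiSubtypeProd (fun _ : Fin n => ν) (· ∈ S)
  have hpre : {x : Fin n → G | (fun i : {i : Fin n // i ∈ S} => x i) ∈ W} =
      (MeasurableEquiv.piEquivPiSubtypeProd (fun _ : Fin n => G) (· ∈ S)) ⁻¹'
        (W ×ˢ Set.univ) := by
    ext x
    simp [MeasurableEquiv.piEquivPiSubtypeProd, Equiv.piEquivPiSubtypeProd]
  rw [hpre, hmp.measure_preimage (hW.prod MeasurableSet.univ).nullMeasurableSet,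
    Measure.prod_prod, measure_univ, mul_one]
  congr!

end aux

section key
open Set
variable {G : Type} [MeasurableSpace G] [NormedAddCommGroup G] [BorelSpace G]
  [SecondCountableTopology G]

lemma aux_key (n ne : ℕ) (hne : ne ≤ n) (μ ν : Measure G) [IsProbabilityMeasure μ]
    [IsProbabilityMeasure ν] (A : Set G) (hA : MeasurableSet A)
    (hres : μ.restrict A = μ A • ν) (c : G) (t1 : ℝ) :
    (Measure.pi fun _ : Fin n => μ)
      {x | t1 ≤ (n : ℝ)⁻¹ * ‖∑ i, A.indicator (fun y => y - c) (x i)‖ ∧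
        (∑ i, A.indicator (fun _ => (1 : ℝ)) (x i)) < (ne : ℝ) + 1} ≤
    ⨆ m : Fin (ne + 1), (Measure.pi fun _ : Fin n => ν)
      {y | t1 ≤ (n : ℝ)⁻¹ * ‖∑ i : Fin n, if (i : ℕ) < (m : ℕ) then y i - c else 0‖} := by
  classical
  set pm : Measure (Fin n → G) := Measure.pi fun _ : Fin n => μ with hpm
  set pmν : Measure (Fin n → G) := Measure.pi fun _ : Fin n => ν with hpmν
  set W : ∀ S : Finset (Fin n), Set ({i : Fin n // i ∈ S} → G) := fun S =>
    {u | t1 ≤ (n : ℝ)⁻¹ * ‖∑ j, (u j - c)‖} with hW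
  have hWmeas : ∀ S, MeasurableSet (W S) := by
    intro S
    exact measurableSet_le measurable_const (measurable_const.mul
      (Finset.measurable_sum Finset.univ
        (fun j _ => (measurable_pi_apply j).sub measurable_const)).norm)
  set cyl : Finset (Fin n) → Set (Fin n → G) := fun S => {x | ∀ i, x i ∈ A ↔ i ∈ S}
    with hcyl
  set ES : Finset (Fin n) → Set (Fin n → G) := fun S =>
    {x | (fun i : {i : Fin n // i ∈ S} => x i) ∈ W S} with hES
  have hcyleq : ∀ S : Finset (Fin n),
      cyl S = Set.pi univ (fun i => if i ∈ S then A else Aᶜ) := by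
    intro S; ext x
    simp only [hcyl, Set.mem_pi, mem_univ, forall_true_left, mem_setOf_eq]
    refine forall_congr' fun i => ?_
    by_cases hi : i ∈ S <;> simp [hi]
  have hcylmeas : ∀ S, MeasurableSet (cyl S) := by
    intro S; rw [hcyleq]
    exact MeasurableSet.univ_pi fun i => by
      by_cases hi : i ∈ S <;> simp [hi, hA, hA.compl]
  have hESmeas : ∀ S, MeasurableSet (ES S) := by
    intro S
    have hm : Measurable fun (x : Fin n → G) (j : {i : Fin n // i ∈ S}) => x (j : Fin n) :=
      measurable_pi_lambda _ fun j => measurable_pi_apply (j : Fin n)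
    exact hm (hWmeas S)
  -- measure of each piece
  have hpiece : ∀ S : Finset (Fin n), pm (cyl S ∩ ES S) =
      μ A ^ S.card * μ Aᶜ ^ (n - S.card) *
        (Measure.pi fun _ : {i : Fin n // i ∈ S} => ν) (W S) := by
    intro S
    have hmp := measurePreserving_piEquivPiSubtypeProd (fun _ : Fin n => μ) (· ∈ S)
    have hpre : cyl S ∩ ES S =
        (MeasurableEquiv.piEquivPiSubtypeProd (fun _ : Fin n => G) (· ∈ S)) ⁻¹'
          ((Set.pi univ (fun _ => A) ∩ W S) ×ˢ
            Set.pi univ (fun _ : {i : Fin n // ¬ i ∈ S} => Aᶜ)) := by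
      ext x
      simp only [hcyl, hES, Set.mem_inter_iff, mem_setOf_eq, Set.mem_preimage,
        MeasurableEquiv.piEquivPiSubtypeProd, Equiv.piEquivPiSubtypeProd,
        MeasurableEquiv.coe_mk, Equiv.coe_fn_mk, Set.mem_prod, Set.mem_pi, mem_univ,
        forall_true_left, Set.mem_compl_iff]
      constructor
      · rintro ⟨h1x, h2x⟩
        exact ⟨⟨fun j => (h1x j).mpr j.2, h2x⟩, fun j hj => j.2 ((h1x j).mp hj)⟩
      · rintro ⟨⟨h1x, h2x⟩, h3x⟩
        refine ⟨fun i => ⟨fun hi => ?_, fun hi => h1x ⟨i, hi⟩⟩, h2x⟩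
        by_contra hiS
        exact h3x ⟨i, hiS⟩ hi
    rw [hpre, hmp.measure_preimage (((MeasurableSet.univ_pi fun _ => hA).inter
      (hWmeas S)).prod (MeasurableSet.univ_pi fun _ => hA.compl)).nullMeasurableSet,
      Measure.prod_prod, Set.inter_comm, ← Measure.restrict_apply (hWmeas S),
      ← aux_pi_restrict μ hA, hres, aux_pi_smul ν (μ A) (measure_ne_top μ A),
      Measure.smul_apply, smul_eq_mul, Measure.pi_pi, Finset.prod_const,
      Finset.card_univ, aux_card_subtype S, aux_card_subtype_compl S, Fintype.card_fin,
      mul_right_comm]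
    congr!
  -- abbreviation for the right-hand side
  set B : ℝ≥0∞ := ⨆ m : Fin (ne + 1), pmν
    {y | t1 ≤ (n : ℝ)⁻¹ * ‖∑ i : Fin n, if (i : ℕ) < (m : ℕ) then y i - c else 0‖} with hB
  -- each subtype product measure is bounded by the sup
  have hQ : ∀ S : Finset (Fin n), S.card ≤ ne →
      (Measure.pi fun _ : {i : Fin n // i ∈ S} => ν) (W S) ≤ B := by
    intro S hS
    set S₀ : Finset (Fin n) := Finset.univ.filter (fun i : Fin n => (i : ℕ) < S.card)
      with hS₀
    have hmn : S.card ≤ n := le_trans hS hne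
    have hS₀card : S₀.card = S.card := by
      have hmap : S₀ = Finset.map (Fin.castLEEmb hmn) Finset.univ := by
        ext j
        simp only [hS₀, Finset.mem_filter, Finset.mem_univ, true_and, Finset.mem_map,
          Fin.castLEEmb, RelEmbedding.coe_toEmbedding, OrderEmbedding.coe_ofStrictMono]
        constructor
        · intro hj; exact ⟨⟨(j : ℕ), hj⟩, rfl⟩
        · rintro ⟨i, rfl⟩; exact i.isLt
      rw [hmap, Finset.card_map, Finset.card_univ, Fintype.card_fin]
    have hre : (Measure.pi fun _ : {i : Fin n // i ∈ S} => ν) (W S) =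
        (Measure.pi fun _ : {i : Fin n // i ∈ S₀} => ν) (W S₀) := by
      have f : {i : Fin n // i ∈ S₀} ≃ {i : Fin n // i ∈ S} :=
        Fintype.equivOfCardEq (by rw [aux_card_subtype S₀, aux_card_subtype S, hS₀card])
      have hmp := measurePreserving_piCongrLeft (fun _ : {i : Fin n // i ∈ S} => ν) f
      rw [← hmp.measure_preimage (hWmeas S).nullMeasurableSet]
      have hsetEq : (MeasurableEquiv.piCongrLeft
          (fun _ : {i : Fin n // i ∈ S} => G) f) ⁻¹' (W S) = W S₀ := by
        ext u
        simp only [hW, Set.mem_preimage, mem_setOf_eq, MeasurableEquiv.coe_piCongrLeft]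
        have hsum : ∑ j : {i : Fin n // i ∈ S},
            ((Equiv.piCongrLeft (fun _ => G) f) u j - c)
            = ∑ j : {i : Fin n // i ∈ S₀}, (u j - c) := by
          rw [← Equiv.sum_comp f (fun j => (Equiv.piCongrLeft (fun _ => G) f) u j - c)]
          refine Finset.sum_congr rfl fun a _ => ?_
          rw [Equiv.piCongrLeft_apply_apply]
        rw [hsum]
      rw [hsetEq]
    have hQm : pmν {y | t1 ≤ (n : ℝ)⁻¹ *
        ‖∑ i : Fin n, if (i : ℕ) < S.card then y i - c else 0‖}
        = (Measure.pi fun _ : {i : Fin n // i ∈ S₀} => ν) (W S₀) := by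
      rw [← aux_pi_subtype ν S₀ (W S₀) (hWmeas S₀)]
      congr 1
      ext y
      simp only [hW, mem_setOf_eq]
      have hsum : ∑ i : Fin n, (if (i : ℕ) < S.card then y i - c else 0)
          = ∑ j : {i : Fin n // i ∈ S₀}, (y (j : Fin n) - c) := by
        rw [Finset.sum_coe_sort S₀ (fun i => y i - c), hS₀]
        exact (Finset.sum_filter _ _).symm
      rw [hsum]
    rw [hre, ← hQm]
    exact le_iSup (fun m : Fin (ne + 1) => pmν
      {y | t1 ≤ (n : ℝ)⁻¹ * ‖∑ i : Fin n, if (i : ℕ) < (m : ℕ) then y i - c else 0‖})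
      ⟨S.card, Nat.lt_succ_of_le hS⟩
  -- decomposition of the event
  set SS : Finset (Finset (Fin n)) :=
    Finset.univ.powerset.filter (fun S : Finset (Fin n) => S.card ≤ ne) with hSS
  have hsum1 : ∀ (x : Fin n → G) (S : Finset (Fin n)), (∀ i, x i ∈ A ↔ i ∈ S) →
      (∑ i, A.indicator (fun y => y - c) (x i)) =
        ∑ j : {i : Fin n // i ∈ S}, (x (j : Fin n) - c) := by
    intro x S hSx
    calc ∑ i, A.indicator (fun y => y - c) (x i)
        = ∑ i, if i ∈ S then x i - c else 0 := by
          refine Finset.sum_congr rfl fun i _ => ?_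
          rw [Set.indicator_apply]
          by_cases hi : i ∈ S
          · rw [if_pos hi, if_pos ((hSx i).mpr hi)]
          · rw [if_neg hi, if_neg (fun h => hi ((hSx i).mp h))]
      _ = ∑ i ∈ S, (x i - c) := by rw [Finset.sum_ite_mem, Finset.univ_inter]
      _ = ∑ j : {i : Fin n // i ∈ S}, (x (j : Fin n) - c) :=
          (Finset.sum_coe_sort S _).symm
  have hsum2 : ∀ (x : Fin n → G) (S : Finset (Fin n)), (∀ i, x i ∈ A ↔ i ∈ S) →
      (∑ i, A.indicator (fun _ => (1 : ℝ)) (x i)) = S.card := by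
    intro x S hSx
    calc ∑ i, A.indicator (fun _ => (1 : ℝ)) (x i)
        = ∑ i, if i ∈ S then (1 : ℝ) else 0 := by
          refine Finset.sum_congr rfl fun i _ => ?_
          rw [Set.indicator_apply]
          by_cases hi : i ∈ S
          · rw [if_pos hi, if_pos ((hSx i).mpr hi)]
          · rw [if_neg hi, if_neg (fun h => hi ((hSx i).mp h))]
      _ = ∑ i ∈ S, (1 : ℝ) := by rw [Finset.sum_ite_mem, Finset.univ_inter]
      _ = S.card := by simp
  have hdecomp : {x : Fin n → G |
        t1 ≤ (n : ℝ)⁻¹ * ‖∑ i, A.indicator (fun y => y - c) (x i)‖ ∧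
        (∑ i, A.indicator (fun _ => (1 : ℝ)) (x i)) < (ne : ℝ) + 1}
      = ⋃ S ∈ SS, cyl S ∩ ES S := by
    ext x
    simp only [Set.mem_setOf_eq, Set.mem_iUnion, Set.mem_inter_iff, hSS,
      Finset.mem_filter, Finset.mem_powerset, exists_prop]
    constructor
    · rintro ⟨hx1, hx2⟩
      set S : Finset (Fin n) := Finset.univ.filter (fun i => x i ∈ A) with hSdef
      have hmem : ∀ i, x i ∈ A ↔ i ∈ S := by
        intro i; simp [hSdef]
      have hcard : S.card ≤ ne := by
        rw [hsum2 x S hmem] at hx2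
        have : (S.card : ℝ) < ((ne + 1 : ℕ) : ℝ) := by push_cast; linarith
        exact Nat.lt_succ_iff.mp (Nat.cast_lt.mp this)
      refine ⟨S, ⟨Finset.subset_univ _, hcard⟩, hmem, ?_⟩
      show t1 ≤ (n : ℝ)⁻¹ * ‖∑ j : {i : Fin n // i ∈ S}, (x (j : Fin n) - c)‖
      rw [← hsum1 x S hmem]; exact hx1
    · rintro ⟨S, ⟨-, hcard⟩, hx1, hx2⟩
      have hx2' : t1 ≤ (n : ℝ)⁻¹ * ‖∑ j : {i : Fin n // i ∈ S}, (x (j : Fin n) - c)‖ := hx2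
      constructor
      · rw [hsum1 x S hx1]; exact hx2'
      · rw [hsum2 x S hx1]
        have : (S.card : ℝ) ≤ (ne : ℝ) := Nat.cast_le.mpr hcard
        linarith
  have hdisj : (↑SS : Set (Finset (Fin n))).PairwiseDisjoint
      (fun S => cyl S ∩ ES S) := by
    intro S hS T hT hST
    refine Set.disjoint_left.mpr ?_
    rintro x ⟨hxS, -⟩ ⟨hxT, -⟩
    exact hST (Finset.ext fun i => by rw [← hxS i, ← hxT i])
  rw [hdecomp, measure_biUnion_finset hdisj
    (fun S _ => (hcylmeas S).inter (hESmeas S))]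
  calc ∑ S ∈ SS, pm (cyl S ∩ ES S)
      ≤ ∑ S ∈ SS, (μ A ^ S.card * μ Aᶜ ^ (n - S.card)) * B := by
        refine Finset.sum_le_sum fun S hS => ?_
        rw [hpiece S]
        exact mul_le_mul_right (hQ S (Finset.mem_filter.mp hS).2) _
    _ = (∑ S ∈ SS, μ A ^ S.card * μ Aᶜ ^ (n - S.card)) * B := by
        rw [Finset.sum_mul]
    _ ≤ 1 * B := by
        refine mul_le_mul_left ?_ B
        calc ∑ S ∈ SS, μ A ^ S.card * μ Aᶜ ^ (n - S.card)
            ≤ ∑ S ∈ Finset.univ.powerset, μ A ^ S.card * μ Aᶜ ^ (n - S.card) :=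
              Finset.sum_le_sum_of_subset (Finset.filter_subset _ _)
          _ = 1 := by
              have hb := Finset.prod_add (fun _ : Fin n => μ A) (fun _ : Fin n => μ Aᶜ)
                Finset.univ
              rw [Finset.prod_const, Finset.card_univ, Fintype.card_fin,
                measure_add_measure_compl hA, measure_univ, one_pow] at hb
              rw [hb]
              refine Finset.sum_congr rfl fun t ht => ?_
              rw [Finset.prod_const, Finset.prod_const, Finset.card_sdiff_of_subset
                (Finset.mem_powerset.mp ht), Finset.card_univ, Fintype.card_fin]
    _ = B := one_mul B

end key

/-- **Proposition: decomposition of concentration for truncated sums.**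
Let `X` be a random vector with law `μX`, `A` a measurable set with `p = P(X ∈ A) > 0`,
`Y` distributed as `X` conditioned on `A`, `Z = 1_{X ∈ A}`. For i.i.d. copies
`(X_i)_{i=1}^n` (on `Ω`) and `(Y_i)_{i=1}^n` (on `Ω'`), every `0 ≤ n_e ≤ n` and
`t₁, t₂ ≥ 0` with `t = t₁ + t₂`:
`P(‖(1/n)Σ X_i 1_{X_i∈A} − E[X 1_{X∈A}]‖ ≥ t) ≤ max_{m ≤ n_e} P((1/n)‖Σ_{i≤m}(Y_i−E[Y])‖ ≥ t₁)
 + P(‖E[Y]‖ |(1/n)Σ Z_i − p| ≥ t₂) + P(Σ Z_i ≥ n_e + 1)`. -/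
theorem truncated_sum_concentration_decomposition
    (d n : ℕ)
    (Ω Ω' : Type) (mΩ : MeasurableSpace Ω) (mΩ' : MeasurableSpace Ω')
    (P : Measure Ω) (P' : Measure Ω')
    (hP : IsProbabilityMeasure P) (hP' : IsProbabilityMeasure P')
    (μX : Measure (EuclideanSpace ℝ (Fin d))) (hμX : IsProbabilityMeasure μX)
    (A : Set (EuclideanSpace ℝ (Fin d))) (hA : MeasurableSet A) (hApos : μX A ≠ 0)
    (X : Fin n → Ω → EuclideanSpace ℝ (Fin d))
    (hXmeas : ∀ i, Measurable (X i))
    (hXlaw : ∀ i, Measure.map (X i) P = μX)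
    (hXindep : ProbabilityTheory.iIndepFun
      (m := fun _ : Fin n => (inferInstance : MeasurableSpace (EuclideanSpace ℝ (Fin d)))) X P)
    (Y : Fin n → Ω' → EuclideanSpace ℝ (Fin d))
    (hYmeas : ∀ i, Measurable (Y i))
    (hYlaw : ∀ i, Measure.map (Y i) P' = ProbabilityTheory.cond μX A)
    (hYindep : ProbabilityTheory.iIndepFun
      (m := fun _ : Fin n => (inferInstance : MeasurableSpace (EuclideanSpace ℝ (Fin d)))) Y P')
    (ne : ℕ) (hne : ne ≤ n) (t1 t2 : ℝ) (ht1 : 0 ≤ t1) (ht2 : 0 ≤ t2) :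
    P {ω | t1 + t2 ≤
        ‖(n : ℝ)⁻¹ • (∑ i, A.indicator id (X i ω)) - ∫ x in A, x ∂μX‖} ≤
      (⨆ m : Fin (ne + 1),
        P' {ω | t1 ≤ (n : ℝ)⁻¹ *
          ‖∑ i : Fin n, if (i : ℕ) < (m : ℕ) then
              Y i ω - ∫ x, x ∂(ProbabilityTheory.cond μX A) else 0‖}) +
      P {ω | t2 ≤ ‖∫ x, x ∂(ProbabilityTheory.cond μX A)‖ *
          |(n : ℝ)⁻¹ * (∑ i, A.indicator (fun _ => (1 : ℝ)) (X i ω)) - (μX A).toReal|} +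
      P {ω | (ne : ℝ) + 1 ≤ ∑ i, A.indicator (fun _ => (1 : ℝ)) (X i ω)} := by
  classical
  have hAtop : μX A ≠ ⊤ := measure_ne_top μX A
  set ν : Measure (EuclideanSpace ℝ (Fin d)) := ProbabilityTheory.cond μX A with hν
  haveI hνP : IsProbabilityMeasure ν := ProbabilityTheory.cond_isProbabilityMeasure hApos
  set c : EuclideanSpace ℝ (Fin d) := ∫ x, x ∂ν with hc
  have hres : μX.restrict A = μX A • ν := by
    rw [hν, ProbabilityTheory.cond, smul_smul, ENNReal.mul_inv_cancel hApos hAtop, one_smul]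
  have hmA : (∫ x in A, x ∂μX) = (μX A).toReal • c := by
    rw [hc, hν, ProbabilityTheory.cond, integral_smul_measure, smul_smul, ENNReal.toReal_inv,
      mul_inv_cancel₀ (ENNReal.toReal_ne_zero.mpr ⟨hApos, hAtop⟩), one_smul]
  set B1C : Set Ω := {ω | (t1 ≤ (n : ℝ)⁻¹ *
      ‖∑ i, A.indicator (fun y => y - c) (X i ω)‖) ∧
      (∑ i, A.indicator (fun _ => (1 : ℝ)) (X i ω)) < (ne : ℝ) + 1} with hB1C
  set B2 : Set Ω := {ω | t2 ≤ ‖c‖ *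
      |(n : ℝ)⁻¹ * (∑ i, A.indicator (fun _ => (1 : ℝ)) (X i ω)) - (μX A).toReal|} with hB2
  set B3 : Set Ω := {ω | (ne : ℝ) + 1 ≤ ∑ i, A.indicator (fun _ => (1 : ℝ)) (X i ω)} with hB3
  have hsubset : {ω | t1 + t2 ≤
      ‖(n : ℝ)⁻¹ • (∑ i, A.indicator id (X i ω)) - ∫ x in A, x ∂μX‖} ⊆
      B1C ∪ (B2 ∪ B3) := by
    intro ω hω
    simp only [Set.mem_setOf_eq] at hω
    by_cases h3 : (ne : ℝ) + 1 ≤ ∑ i, A.indicator (fun _ => (1 : ℝ)) (X i ω)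
    · exact Or.inr (Or.inr h3)
    by_cases h2 : t2 ≤ ‖c‖ *
        |(n : ℝ)⁻¹ * (∑ i, A.indicator (fun _ => (1 : ℝ)) (X i ω)) - (μX A).toReal|
    · exact Or.inr (Or.inl h2)
    left
    refine ⟨?_, lt_of_not_ge h3⟩
    have hdec : (n : ℝ)⁻¹ • (∑ i, A.indicator id (X i ω)) - ∫ x in A, x ∂μX
        = (n : ℝ)⁻¹ • (∑ i, A.indicator (fun y => y - c) (X i ω))
          + ((n : ℝ)⁻¹ * (∑ i, A.indicator (fun _ => (1 : ℝ)) (X i ω)) - (μX A).toReal) • c := by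
      have hptw : ∀ i, A.indicator id (X i ω) =
          A.indicator (fun y => y - c) (X i ω) +
            A.indicator (fun _ => (1 : ℝ)) (X i ω) • c := by
        intro i
        by_cases hi : X i ω ∈ A
        · simp [Set.indicator_of_mem hi]
        · simp [Set.indicator_of_notMem hi]
      rw [hmA]
      simp_rw [hptw]
      rw [Finset.sum_add_distrib, ← Finset.sum_smul, smul_add, smul_smul, add_sub_assoc,
        ← sub_smul]
    have hnorm : ‖(n : ℝ)⁻¹ • (∑ i, A.indicator id (X i ω)) - ∫ x in A, x ∂μX‖
        ≤ (n : ℝ)⁻¹ * ‖∑ i, A.indicator (fun y => y - c) (X i ω)‖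
          + ‖c‖ * |(n : ℝ)⁻¹ * (∑ i, A.indicator (fun _ => (1 : ℝ)) (X i ω)) - (μX A).toReal| := by
      rw [hdec]
      refine (norm_add_le _ _).trans ?_
      rw [norm_smul, norm_smul, Real.norm_eq_abs, Real.norm_eq_abs,
        abs_of_nonneg (inv_nonneg.mpr (Nat.cast_nonneg n)), mul_comm ‖c‖]
    push_neg at h2
    linarith
  set D : Set (Fin n → EuclideanSpace ℝ (Fin d)) := {x | t1 ≤ (n : ℝ)⁻¹ *
      ‖∑ i, A.indicator (fun y => y - c) (x i)‖ ∧
      (∑ i, A.indicator (fun _ => (1 : ℝ)) (x i)) < (ne : ℝ) + 1} with hD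
  have hDmeas : MeasurableSet D := by
    rw [hD, Set.setOf_and]
    refine MeasurableSet.inter ?_ ?_
    · exact measurableSet_le measurable_const (measurable_const.mul
        (Finset.measurable_sum Finset.univ fun i _ =>
          ((measurable_id.sub measurable_const).indicator hA).comp
            (measurable_pi_apply i)).norm)
    · exact measurableSet_lt (Finset.measurable_sum Finset.univ fun i _ =>
        ((measurable_const.indicator hA).comp (measurable_pi_apply i))) measurable_const
  have hmapX : Measure.map (fun ω i => X i ω) P = Measure.pi (fun _ : Fin n => μX) := by
    rw [aux_map_pi_of_iIndep P X hXmeas hXindep]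
    exact congrArg Measure.pi (funext fun i => hXlaw i)
  have hmapY : Measure.map (fun ω i => Y i ω) P' = Measure.pi (fun _ : Fin n => ν) := by
    rw [aux_map_pi_of_iIndep P' Y hYmeas hYindep]
    exact congrArg Measure.pi (funext fun i => hYlaw i)
  have hPB1C : P B1C = (Measure.pi fun _ : Fin n => μX) D := by
    rw [← hmapX, Measure.map_apply (measurable_pi_lambda _ fun i => hXmeas i) hDmeas]
    rfl
  have hQmeas : ∀ m : Fin (ne + 1), MeasurableSet {y : Fin n → EuclideanSpace ℝ (Fin d) |
      t1 ≤ (n : ℝ)⁻¹ * ‖∑ i : Fin n, if (i : ℕ) < (m : ℕ) then y i - c else 0‖} := by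
    intro m
    refine measurableSet_le measurable_const (measurable_const.mul
      (Finset.measurable_sum Finset.univ fun i _ => ?_).norm)
    by_cases hi : (i : ℕ) < (m : ℕ)
    · simp only [hi, if_true]
      exact (measurable_pi_apply i).sub measurable_const
    · simp only [hi, if_false]
      exact measurable_const
  have hPY : ∀ m : Fin (ne + 1),
      P' {ω | t1 ≤ (n : ℝ)⁻¹ * ‖∑ i : Fin n, if (i : ℕ) < (m : ℕ) then Y i ω - c else 0‖}
        = (Measure.pi fun _ : Fin n => ν)
          {y | t1 ≤ (n : ℝ)⁻¹ * ‖∑ i : Fin n, if (i : ℕ) < (m : ℕ) then y i - c else 0‖} := by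
    intro m
    rw [← hmapY, Measure.map_apply (measurable_pi_lambda _ fun i => hYmeas i) (hQmeas m)]
    rfl
  have hkey : P B1C ≤ ⨆ m : Fin (ne + 1),
      P' {ω | t1 ≤ (n : ℝ)⁻¹ * ‖∑ i : Fin n, if (i : ℕ) < (m : ℕ) then Y i ω - c else 0‖} := by
    rw [hPB1C, iSup_congr hPY]
    exact aux_key n ne hne μX ν A hA hres c t1
  calc P {ω | t1 + t2 ≤
        ‖(n : ℝ)⁻¹ • (∑ i, A.indicator id (X i ω)) - ∫ x in A, x ∂μX‖}
      ≤ P (B1C ∪ (B2 ∪ B3)) := measure_mono hsubset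
    _ ≤ P B1C + P (B2 ∪ B3) := measure_union_le _ _
    _ ≤ P B1C + (P B2 + P B3) := add_le_add_right (measure_union_le _ _) _
    _ ≤ (⨆ m : Fin (ne + 1),
          P' {ω | t1 ≤ (n : ℝ)⁻¹ *
            ‖∑ i : Fin n, if (i : ℕ) < (m : ℕ) then Y i ω - c else 0‖}) + (P B2 + P B3) :=
        by gcongr
    _ = _ := by rw [← add_assoc]
end

section
/- Suppose the mixture of k spherical Gaussians satisfies ‖μ_i* − μ_j*‖ ≥ C (σ_i* ∨ σ_j*) · c √(log(ρ_σ/π_min)) for all i ≠ j, where C is a universal constant with C² ≥ 4096 and c > 2 is a given constant. Then for each q ∈ {0, 1, 2}, ρ_π Σ_{j≠1} (R_{j1}*)^q exp(−(R_{j1}*)²/(128 c (σ_1* ∨ σ_j*)²)) ≤ c_q (σ_1*)^q π_min, where c_0, c_1, c_2 are absolute constants that can be made arbitrarily small by choosing C large enough. -/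
open MeasureTheory Real
open scoped BigOperators ENNReal ProbabilityTheory RealInnerProductSpace

set_option maxHeartbeats 1000000 in
/-- **Lemma: finite-sample summed weight-error bounds.**
Under the separation `‖μ_i* − μ_j*‖ ≥ C (σ_i* ∨ σ_j*) · c √(log(ρ_σ/π_min))` for all
`i ≠ j` (with a universal constant `C` with `C² ≥ 4096` and any given `c > 2`),
for each `q ∈ {0,1,2}` we have
`ρ_π Σ_{j≠1} (R_{j1}*)^q exp(−(R_{j1}*)²/(128 c (σ_1* ∨ σ_j*)²)) ≤ c_q (σ_1*)^q π_min`,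
where the constants `c_q` can be made arbitrarily small by taking `C` large enough. -/
theorem finite_sample_sum_weight_error_bounds (cq : ℝ) (hcq : 0 < cq) :
    ∃ C : ℝ, 4096 ≤ C ^ 2 ∧
    ∀ c : ℝ, 2 < c →
    ∀ (d k : ℕ), 1 ≤ d → 2 ≤ k →
    ∀ (ps : Fin k → ℝ) (μs : Fin k → EuclideanSpace ℝ (Fin d)) (σs : Fin k → ℝ),
    (∀ i, 0 < ps i) → (∑ i, ps i = 1) → (∀ i, 0 < σs i) →
    (∀ i j, i ≠ j →
      C * max (σs i) (σs j) *
          (c * Real.sqrt (Real.log ((finSup σs / finInf σs) / finInf ps)))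
        ≤ ‖μs i - μs j‖) →
    ∀ one : Fin k, (one : ℕ) = 0 →
    ∀ q ∈ ({0, 1, 2} : Finset ℕ),
      (finSup ps / finInf ps) *
          ∑ j ∈ Finset.univ.erase one,
            ‖μs j - μs one‖ ^ q *
              Real.exp (-‖μs j - μs one‖ ^ 2 / (128 * c * max (σs one) (σs j) ^ 2))
        ≤ cq * σs one ^ q * finInf ps := by
  classical
  have hlog2 : (0:ℝ) < Real.log 2 := Real.log_pos one_lt_two
  set g : ℝ := max 0 (Real.log (257 / cq)) with hgdef
  have hg0 : 0 ≤ g := le_max_left _ _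
  set D : ℝ := 256 * (1 + g) / Real.log 2 with hDdef
  have hD0 : 0 ≤ D := by positivity
  refine ⟨Real.sqrt (4096 + D), ?_, ?_⟩
  · rw [Real.sq_sqrt (by linarith)]; linarith
  intro c hc d k hd hk ps μs σs hps hsum hσs hsep one hone q hq
  have hc0 : (0:ℝ) < c := by linarith
  set C : ℝ := Real.sqrt (4096 + D) with hCdef
  have hC2 : C ^ 2 = 4096 + D := Real.sq_sqrt (by linarith)
  have hC0 : 0 ≤ C := Real.sqrt_nonneg _
  haveI : Nonempty (Fin k) := ⟨⟨0, by omega⟩⟩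
  set πm : ℝ := finInf ps with hπmdef
  set πM : ℝ := finSup ps with hπMdef
  set σm : ℝ := finInf σs with hσmdef
  set σM : ℝ := finSup σs with hσMdef
  set σ1 : ℝ := σs one with hσ1def
  set ρ : ℝ := σM / σm with hρdef
  set L : ℝ := Real.log (ρ / πm) with hLdef
  have hπm_le : ∀ i, πm ≤ ps i := fun i => ciInf_le (Finite.bddBelow_range ps) i
  have hπM_ge : ∀ i, ps i ≤ πM := fun i => le_ciSup (Finite.bddAbove_range ps) i
  have hσm_le : ∀ i, σm ≤ σs i := fun i => ciInf_le (Finite.bddBelow_range σs) i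
  have hσM_ge : ∀ i, σs i ≤ σM := fun i => le_ciSup (Finite.bddAbove_range σs) i
  have hπm0 : 0 < πm := by
    obtain ⟨i0, hi0⟩ := Finite.exists_min ps
    exact lt_of_lt_of_le (hps i0) (le_ciInf hi0)
  have hσm0 : 0 < σm := by
    obtain ⟨i0, hi0⟩ := Finite.exists_min σs
    exact lt_of_lt_of_le (hσs i0) (le_ciInf hi0)
  have hσ10 : 0 < σ1 := hσs one
  have hπM1 : πM ≤ 1 := by
    refine ciSup_le fun i => ?_
    calc ps i ≤ ∑ j, ps j :=
          Finset.single_le_sum (fun j _ => (hps j).le) (Finset.mem_univ i)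
    _ = 1 := hsum
  have hkπm : (k : ℝ) * πm ≤ 1 := by
    have h := Finset.sum_le_sum (fun j (_ : j ∈ Finset.univ) => hπm_le j)
    rw [hsum, Finset.sum_const, Finset.card_univ, Fintype.card_fin, nsmul_eq_mul] at h
    exact h
  have hπm_half : πm ≤ 1 / 2 := by
    have hk2 : (2:ℝ) ≤ (k:ℝ) := by exact_mod_cast hk
    have h2k : (2:ℝ) * πm ≤ (k:ℝ) * πm := mul_le_mul_of_nonneg_right hk2 hπm0.le
    linarith
  have hρ1 : 1 ≤ ρ := by
    have h : σm ≤ σM := le_trans (hσm_le one) (hσM_ge one)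
    rw [hρdef]; exact (one_le_div hσm0).mpr h
  have hρ0 : 0 < ρ := lt_of_lt_of_le one_pos hρ1
  have hratio2 : (2:ℝ) ≤ ρ / πm := by
    rw [le_div_iff₀ hπm0]; linarith
  have hL2 : Real.log 2 ≤ L := Real.log_le_log two_pos hratio2
  have hL0 : 0 < L := lt_of_lt_of_le hlog2 hL2
  have hexpL : Real.exp (-L) = πm / ρ := by
    rw [hLdef, Real.exp_neg, Real.exp_log (by positivity), inv_div]
  set E : ℝ := Real.exp (-(c * (1 + g))) with hEdef
  have hE0 : 0 < E := Real.exp_pos _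
  have hcE : 257 * c * E ≤ cq := by
    have h1 : c * Real.exp (-c) ≤ 1 := by
      have h := Real.add_one_le_exp c
      have hec : 0 < Real.exp (-c) := Real.exp_pos (-c)
      have hmul : Real.exp (-c) * Real.exp c = 1 := by
        rw [← Real.exp_add]; simp
      linarith [mul_le_mul_of_nonneg_right h hec.le]
    have h2 : Real.exp (-(c * g)) ≤ Real.exp (-(2 * g)) := by
      apply Real.exp_le_exp.mpr
      linarith [mul_le_mul_of_nonneg_right hc.le hg0]
    have h3 : 257 * Real.exp (-(2 * g)) ≤ cq := by
      rcases le_or_gt 257 cq with h | h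
      · have he : Real.exp (-(2 * g)) ≤ 1 := Real.exp_le_one_iff.mpr (by linarith)
        linarith
      · have hgt : 1 < 257 / cq := by rw [lt_div_iff₀ hcq]; linarith
        have hglog : g = Real.log (257 / cq) := by
          rw [hgdef, max_eq_right (Real.log_nonneg hgt.le)]
        have hexpg : Real.exp g = 257 / cq := by rw [hglog, Real.exp_log (by positivity)]
        have heq : Real.exp (-(2 * g)) = (cq / 257) ^ 2 := by
          rw [show -(2*g) = ((2:ℕ) : ℝ) * (-g) by push_cast; ring, Real.exp_nat_mul,
            Real.exp_neg, hexpg]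
          rw [inv_div]
        rw [heq, show 257 * (cq / 257) ^ 2 = cq * cq / 257 by ring,
          div_le_iff₀ (by norm_num : (0:ℝ) < 257)]
        have hm := mul_le_mul_of_nonneg_right h.le hcq.le
        linarith
    have hEeq : E = Real.exp (-c) * Real.exp (-(c * g)) := by
      rw [hEdef, ← Real.exp_add]; ring_nf
    calc 257 * c * E = (c * Real.exp (-c)) * (257 * Real.exp (-(c * g))) := by
          rw [hEeq]; ring
    _ ≤ 1 * (257 * Real.exp (-(c * g))) :=
        mul_le_mul_of_nonneg_right h1 (by positivity)
    _ = 257 * Real.exp (-(c * g)) := by ring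
    _ ≤ 257 * Real.exp (-(2 * g)) := by linarith
    _ ≤ cq := h3
  set Bnd : ℝ := σ1 ^ q * (257 * c * ρ ^ 2) * ((πm / ρ) ^ 4 * E) with hBnddef
  have hBnd0 : 0 ≤ Bnd := by positivity
  have hterm : ∀ j ∈ Finset.univ.erase one,
      ‖μs j - μs one‖ ^ q *
        Real.exp (-‖μs j - μs one‖ ^ 2 / (128 * c * max σ1 (σs j) ^ 2)) ≤ Bnd := by
    intro j hj
    have hjne : j ≠ one := Finset.ne_of_mem_erase hj
    set x : ℝ := ‖μs j - μs one‖ with hxdef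
    set s : ℝ := max σ1 (σs j) with hsdef
    have hs0 : 0 < s := lt_max_of_lt_left hσ10
    have hx0 : 0 ≤ x := norm_nonneg _
    have hsσM : s ≤ σM := max_le (hσM_ge one) (hσM_ge j)
    have hsep' : C * s * (c * Real.sqrt L) ≤ x := by
      have h := hsep j one hjne
      rw [max_comm (σs j) (σs one)] at h
      exact h
    have hsqrtL : Real.sqrt L ^ 2 = L := Real.sq_sqrt hL0.le
    have hlhs0 : 0 ≤ C * s * (c * Real.sqrt L) := by positivity
    have hx2 : C ^ 2 * c ^ 2 * s ^ 2 * L ≤ x ^ 2 := by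
      have h := mul_self_le_mul_self hlhs0 hsep'
      calc C ^ 2 * c ^ 2 * s ^ 2 * L
          = (C * s * (c * Real.sqrt L)) * (C * s * (c * Real.sqrt L)) := by
            rw [show (C * s * (c * Real.sqrt L)) * (C * s * (c * Real.sqrt L))
              = C ^ 2 * c ^ 2 * s ^ 2 * (Real.sqrt L ^ 2) by ring, hsqrtL]
      _ ≤ x * x := h
      _ = x ^ 2 := (sq x).symm
    set t : ℝ := x ^ 2 / (2 * (128 * c * s ^ 2)) with htdef
    have hA0 : (0:ℝ) < 128 * c * s ^ 2 := by positivity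
    have ht0 : 0 ≤ t := by positivity
    have h2A : t + t = x ^ 2 / (128 * c * s ^ 2) := by
      rw [htdef]; field_simp; ring
    have hsplit : Real.exp (-x ^ 2 / (128 * c * s ^ 2)) = Real.exp (-t) * Real.exp (-t) := by
      rw [← Real.exp_add, neg_div, ← h2A]
      congr 1; ring
    have hexpt1 : Real.exp (-t) ≤ 1 := Real.exp_le_one_iff.mpr (by linarith)
    have hx2e : x ^ 2 * Real.exp (-t) ≤ 2 * (128 * c * s ^ 2) := by
      have hte : t * Real.exp (-t) ≤ 1 := by
        have h := Real.add_one_le_exp t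
        have hec : 0 < Real.exp (-t) := Real.exp_pos (-t)
        have hmul : Real.exp (-t) * Real.exp t = 1 := by
          rw [← Real.exp_add]; simp
        linarith [mul_le_mul_of_nonneg_right h hec.le]
      have hxeq : x ^ 2 = 2 * (128 * c * s ^ 2) * t := by
        rw [htdef]; field_simp
      rw [hxeq]
      calc 2 * (128 * c * s ^ 2) * t * Real.exp (-t)
          = 2 * (128 * c * s ^ 2) * (t * Real.exp (-t)) := by ring
      _ ≤ 2 * (128 * c * s ^ 2) * 1 :=
          mul_le_mul_of_nonneg_left hte (by positivity)
      _ = 2 * (128 * c * s ^ 2) := by ring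
    have h1 : x ^ q * Real.exp (-t) ≤ σ1 ^ q * (257 * c * ρ ^ 2) := by
      have hkey : x ^ q * σ1 ^ 2 ≤ σ1 ^ q * (σ1 ^ 2 + x ^ 2) := by
        simp only [Finset.mem_insert, Finset.mem_singleton] at hq
        rcases hq with rfl | rfl | rfl
        · simp only [pow_zero, one_mul]; linarith [sq_nonneg x]
        · simp only [pow_one]
          have ha := mul_nonneg hσ10.le (sq_nonneg (x - σ1))
          have hb := mul_nonneg (mul_nonneg hσ10.le hσ10.le) hx0
          linarith [ha, hb]
        · linarith [mul_nonneg (sq_nonneg σ1) (sq_nonneg σ1),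
            mul_le_mul_of_nonneg_left (sq_nonneg x) (sq_nonneg σ1)]
      have hsρ : s ^ 2 ≤ ρ ^ 2 * σ1 ^ 2 := by
        have hσmσ1 : σm ≤ σ1 := hσm_le one
        rw [hρdef, div_pow, div_mul_eq_mul_div, le_div_iff₀ (by positivity)]
        have h := mul_le_mul (pow_le_pow_left₀ hs0.le hsσM 2)
          (pow_le_pow_left₀ hσm0.le hσmσ1 2) (by positivity) (by positivity)
        linarith
      have hgoal2 : σ1 ^ 2 + 2 * (128 * c * s ^ 2) ≤ (257 * c * ρ ^ 2) * σ1 ^ 2 := by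
        have hρ2 : (1:ℝ) ≤ ρ ^ 2 := by
          calc (1:ℝ) = 1 * 1 := by ring
          _ ≤ ρ * ρ := mul_le_mul hρ1 hρ1 zero_le_one hρ0.le
          _ = ρ ^ 2 := (sq ρ).symm
        have hσ1ρ : σ1 ^ 2 ≤ ρ ^ 2 * σ1 ^ 2 := by
          have := mul_le_mul_of_nonneg_right hρ2 (sq_nonneg σ1)
          linarith
        have ha := mul_le_mul_of_nonneg_left hsρ (by linarith : (0:ℝ) ≤ 256 * c)
        have hb := mul_nonneg (by linarith : (0:ℝ) ≤ c - 1)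
          (mul_nonneg (sq_nonneg ρ) (sq_nonneg σ1))
        linarith
      rw [← mul_le_mul_iff_of_pos_right (show (0:ℝ) < σ1 ^ 2 by positivity)]
      calc x ^ q * Real.exp (-t) * σ1 ^ 2 = (x ^ q * σ1 ^ 2) * Real.exp (-t) := by ring
      _ ≤ (σ1 ^ q * (σ1 ^ 2 + x ^ 2)) * Real.exp (-t) :=
          mul_le_mul_of_nonneg_right hkey (Real.exp_pos _).le
      _ = σ1 ^ q * (σ1 ^ 2 * Real.exp (-t) + x ^ 2 * Real.exp (-t)) := by ring
      _ ≤ σ1 ^ q * (σ1 ^ 2 + 2 * (128 * c * s ^ 2)) := by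
          apply mul_le_mul_of_nonneg_left ?_ (by positivity)
          have hh : σ1 ^ 2 * Real.exp (-t) ≤ σ1 ^ 2 := by
            have := mul_le_mul_of_nonneg_left hexpt1 (sq_nonneg σ1)
            linarith
          linarith
      _ ≤ σ1 ^ q * ((257 * c * ρ ^ 2) * σ1 ^ 2) :=
          mul_le_mul_of_nonneg_left hgoal2 (by positivity)
      _ = σ1 ^ q * (257 * c * ρ ^ 2) * σ1 ^ 2 := by ring
    have h2 : Real.exp (-t) ≤ (πm / ρ) ^ 4 * E := by
      have hdiv : C ^ 2 * c * L / 256 ≤ t := by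
        rw [htdef, div_le_div_iff₀ (by norm_num) (by positivity)]
        linarith [hx2]
      have hsplit2 : 4 * L + c * (1 + g) ≤ C ^ 2 * c * L / 256 := by
        rw [hC2]
        have hterm1 : 4 * L ≤ 4096 * c * L / 256 := by
          have h := mul_le_mul_of_nonneg_right (show (4:ℝ) ≤ 16 * c by linarith) hL0.le
          have heq16 : 4096 * c * L / 256 = 16 * c * L := by ring
          linarith [heq16 ▸ h]
        have hterm2 : c * (1 + g) ≤ D * c * L / 256 := by
          have heq : D * c * L / 256 = c * (1 + g) * (L / Real.log 2) := by
            rw [hDdef]; field_simp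
          rw [heq]
          have hLr : 1 ≤ L / Real.log 2 := (one_le_div hlog2).mpr hL2
          have h := mul_le_mul_of_nonneg_left hLr (show (0:ℝ) ≤ c * (1 + g) by positivity)
          linarith
        have heqD : (4096 + D) * c * L / 256 = 4096 * c * L / 256 + D * c * L / 256 := by
          ring
        linarith
      calc Real.exp (-t) ≤ Real.exp (-(4 * L + c * (1 + g))) :=
          Real.exp_le_exp.mpr (by linarith)
      _ = Real.exp (-L) ^ 4 * E := by
          rw [hEdef, ← Real.exp_nat_mul, ← Real.exp_add]
          congr 1; push_cast; ring
      _ = (πm / ρ) ^ 4 * E := by rw [hexpL]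
    calc x ^ q * Real.exp (-x ^ 2 / (128 * c * s ^ 2))
        = (x ^ q * Real.exp (-t)) * Real.exp (-t) := by rw [hsplit]; ring
    _ ≤ (σ1 ^ q * (257 * c * ρ ^ 2)) * ((πm / ρ) ^ 4 * E) :=
        mul_le_mul h1 h2 (Real.exp_pos _).le (by positivity)
    _ = Bnd := rfl
  have hcard : (Finset.univ.erase one).card = k - 1 := by
    rw [Finset.card_erase_of_mem (Finset.mem_univ one), Finset.card_univ, Fintype.card_fin]
  have hsum_le : (∑ j ∈ Finset.univ.erase one,
      ‖μs j - μs one‖ ^ q *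
        Real.exp (-‖μs j - μs one‖ ^ 2 / (128 * c * max σ1 (σs j) ^ 2))) ≤ (k:ℝ) * Bnd := by
    calc (∑ j ∈ Finset.univ.erase one, _) ≤ (Finset.univ.erase one).card • Bnd :=
        Finset.sum_le_card_nsmul _ _ _ hterm
    _ = ((k - 1 : ℕ) : ℝ) * Bnd := by rw [hcard, nsmul_eq_mul]
    _ ≤ (k:ℝ) * Bnd := by
        apply mul_le_mul_of_nonneg_right ?_ hBnd0
        exact_mod_cast Nat.sub_le k 1
  have hπM0 : 0 < πM := lt_of_lt_of_le (hps one) (hπM_ge one)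
  have hr0 : 0 ≤ πM / πm := by positivity
  have hinner : (257 * c * E) * (((k:ℝ) * πm) * (πm * (πm / ρ ^ 2))) ≤ cq * πm := by
    have hd1 : πm / ρ ^ 2 ≤ πm := by
      rw [div_le_iff₀ (by positivity)]
      have hρ2 : (1:ℝ) ≤ ρ ^ 2 := by
        calc (1:ℝ) = 1 * 1 := by ring
        _ ≤ ρ * ρ := mul_le_mul hρ1 hρ1 zero_le_one hρ0.le
        _ = ρ ^ 2 := (sq ρ).symm
      have h := mul_le_mul_of_nonneg_left hρ2 hπm0.le
      linarith
    have hstep : ((k:ℝ) * πm) * (πm * (πm / ρ ^ 2)) ≤ 1 * (πm * πm) := by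
      apply mul_le_mul hkπm ?_ (by positivity) one_pos.le
      exact mul_le_mul_of_nonneg_left hd1 hπm0.le
    calc (257 * c * E) * (((k:ℝ) * πm) * (πm * (πm / ρ ^ 2)))
        ≤ (257 * c * E) * (1 * (πm * πm)) :=
          mul_le_mul_of_nonneg_left hstep (by positivity)
    _ ≤ cq * (1 * (πm * πm)) := mul_le_mul_of_nonneg_right hcE (by positivity)
    _ = cq * (πm * πm) := by ring
    _ ≤ cq * πm := by
        have h := mul_le_mul_of_nonneg_left (show πm ≤ 1 by linarith) hπm0.le
        have := mul_le_mul_of_nonneg_left (show πm * πm ≤ πm by linarith) hcq.le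
        linarith
  calc (πM / πm) * ∑ j ∈ Finset.univ.erase one,
        ‖μs j - μs one‖ ^ q *
          Real.exp (-‖μs j - μs one‖ ^ 2 / (128 * c * max σ1 (σs j) ^ 2))
      ≤ (πM / πm) * ((k:ℝ) * Bnd) := mul_le_mul_of_nonneg_left hsum_le hr0
  _ ≤ (1 / πm) * ((k:ℝ) * Bnd) := by
      apply mul_le_mul_of_nonneg_right ((div_le_div_iff_of_pos_right hπm0).mpr hπM1)
      exact mul_nonneg (Nat.cast_nonneg k) hBnd0
  _ = σ1 ^ q * ((257 * c * E) * (((k:ℝ) * πm) * (πm * (πm / ρ ^ 2)))) := by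
      rw [hBnddef]; field_simp
  _ ≤ σ1 ^ q * (cq * πm) := mul_le_mul_of_nonneg_left hinner (by positivity)
  _ = cq * σ1 ^ q * πm := by ring
end

section
/- Suppose the mixture of k spherical Gaussians satisfies ‖μ_i* − μ_j*‖ ≥ C (σ_i* ∨ σ_j*) √(log k + log(ρ_σ ρ_π)) for all i ≠ j, for a sufficiently large universal constant C ≥ 128. Then for each q ∈ {0, 1, 2, 3, 4}: Σ_{j≠1} (π_1* + π_j*) (R_{j1}*/σ_1*)^q exp(−(R_{j1}*)²/(128 (σ_1* ∨ σ_j*)²)) ≤ c_q π_1*, and likewise Σ_{j≠1} (π_1* + π_j*) (R_{j1}*/σ_j*)^q exp(−(R_{j1}*)²/(128 (σ_1* ∨ σ_j*)²)) ≤ c_q π_1*, where the c_q are absolute constants that can be made arbitrarily small by choosing C large enough. -/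
open MeasureTheory Real
open scoped BigOperators ENNReal ProbabilityTheory RealInnerProductSpace

noncomputable def mval (cq : ℝ) : ℝ := 6 + max 0 (Real.log (524288 / cq)) / Real.log 2
noncomputable def Cval (cq : ℝ) : ℝ := max 128 (16 * Real.sqrt (mval cq))

lemma log2_pos : (0:ℝ) < Real.log 2 := Real.log_pos (by norm_num)

lemma mval_ge (cq : ℝ) : 6 ≤ mval cq := by
  have h : 0 ≤ max 0 (Real.log (524288 / cq)) / Real.log 2 :=
    div_nonneg (le_max_left _ _) log2_pos.le
  unfold mval; linarith

lemma Cval_ge (cq : ℝ) : 128 ≤ Cval cq := le_max_left _ _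

lemma Cval_sq (cq : ℝ) : 256 * mval cq ≤ Cval cq ^ 2 := by
  have hm : (0:ℝ) ≤ mval cq := by linarith [mval_ge cq]
  have h1 : 16 * Real.sqrt (mval cq) ≤ Cval cq := le_max_right _ _
  have h2 : (16 * Real.sqrt (mval cq)) ^ 2 ≤ Cval cq ^ 2 :=
    pow_le_pow_left₀ (by positivity) h1 2
  have h3 : (16 * Real.sqrt (mval cq)) ^ 2 = 256 * mval cq := by
    rw [mul_pow, Real.sq_sqrt hm]; norm_num
  linarith

lemma final_bound (cq : ℝ) (hcq : 0 < cq) (L : ℝ) (hL : Real.log 2 ≤ L) :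
    524288 * Real.exp ((6 - mval cq) * L) ≤ cq := by
  have h6m : 6 - mval cq ≤ 0 := by linarith [mval_ge cq]
  have hmono : Real.exp ((6 - mval cq) * L) ≤ Real.exp ((6 - mval cq) * Real.log 2) :=
    Real.exp_le_exp.mpr (mul_le_mul_of_nonpos_left hL h6m)
  have hkey : (6 - mval cq) * Real.log 2 = -(max 0 (Real.log (524288 / cq))) := by
    unfold mval
    field_simp
    ring
  rw [hkey] at hmono
  rcases le_or_gt (Real.log (524288 / cq)) 0 with h | h
  · rw [max_eq_left h, neg_zero, Real.exp_zero] at hmono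
    have hx : (524288:ℝ) / cq ≤ 1 := by
      by_contra hcon
      push_neg at hcon
      exact absurd (Real.log_pos hcon) (not_lt.mpr h)
    rw [div_le_one hcq] at hx
    nlinarith [Real.exp_pos ((6 - mval cq) * L)]
  · rw [max_eq_right h.le] at hmono
    have hval : Real.exp (-(Real.log (524288 / cq))) = cq / 524288 := by
      rw [Real.exp_neg, Real.exp_log (by positivity), inv_div]
    rw [hval] at hmono
    nlinarith


lemma exp_poly_bound (t M : ℝ) (ht : 1 ≤ t) (hM : M ≤ t ^ 2 / 256) (q : ℕ) (hq : q ≤ 4) :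
    t ^ q * Real.exp (-(t ^ 2 / 128)) ≤ 262144 * Real.exp (-M) := by
  have ht0 : (0:ℝ) ≤ t := by linarith
  have hq' : t ^ q ≤ t ^ 4 := pow_le_pow_right₀ ht hq
  have h1 : t ^ 2 / 512 + 1 ≤ Real.exp (t ^ 2 / 512) := by
    linarith [Real.add_one_le_exp (t ^ 2 / 512)]
  have h2 : (t ^ 2 / 512 + 1) * (t ^ 2 / 512 + 1) ≤ Real.exp (t ^ 2 / 256) := by
    rw [show Real.exp (t ^ 2 / 256) = Real.exp (t ^ 2 / 512) * Real.exp (t ^ 2 / 512) by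
      rw [← Real.exp_add]; ring_nf]
    exact mul_le_mul h1 h1 (by positivity) (Real.exp_pos _).le
  have h3 : t ^ 4 ≤ 262144 * Real.exp (t ^ 2 / 256) := by nlinarith [sq_nonneg t]
  have hE2 : Real.exp (t ^ 2 / 256) * Real.exp (-(t ^ 2 / 256)) = 1 := by
    rw [← Real.exp_add]; simp
  have h4 : t ^ 4 * Real.exp (-(t ^ 2 / 256)) ≤ 262144 := by
    nlinarith [h3, hE2, Real.exp_pos (-(t ^ 2 / 256))]
  calc t ^ q * Real.exp (-(t ^ 2 / 128))
      ≤ t ^ 4 * Real.exp (-(t ^ 2 / 128)) :=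
        mul_le_mul_of_nonneg_right hq' (Real.exp_pos _).le
    _ = (t ^ 4 * Real.exp (-(t ^ 2 / 256))) * Real.exp (-(t ^ 2 / 256)) := by
        rw [mul_assoc, ← Real.exp_add]; ring_nf
    _ ≤ 262144 * Real.exp (-(t ^ 2 / 256)) :=
        mul_le_mul_of_nonneg_right h4 (Real.exp_pos _).le
    _ ≤ 262144 * Real.exp (-M) := by
        have := Real.exp_le_exp.mpr (by linarith : -(t ^ 2 / 256) ≤ -M)
        linarith

lemma per_term (C m L sI sS pI pS p1 pj σ s R : ℝ) (q : ℕ)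
    (hC128 : 128 ≤ C) (hC2 : 256 * m ≤ C ^ 2) (hm0 : 6 ≤ m)
    (hL2 : Real.log 2 ≤ L)
    (hsI : 0 < sI) (hpI : 0 < pI)
    (hσI : sI ≤ σ)
    (hs0 : 0 < s) (hsS : s ≤ sS)
    (hp1I : pI ≤ p1) (hpjS : pj ≤ pS) (hp1 : 0 < p1)
    (hρσ1 : 1 ≤ sS / sI) (hρπ1 : 1 ≤ pS / pI)
    (hsep : C * s * Real.sqrt L ≤ R)
    (hq : q ≤ 4) :
    (p1 + pj) * (R / σ) ^ q * Real.exp (-R ^ 2 / (128 * s ^ 2))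
      ≤ 2 * (pS / pI) * p1 * (sS / sI) ^ 4 * (262144 * Real.exp (-(m * L))) := by
  have hσ : 0 < σ := lt_of_lt_of_le hsI hσI
  have hL0 : 0 < L := lt_of_lt_of_le (Real.log_pos (by norm_num)) hL2
  have hC0 : 0 < C := by linarith
  have hR0 : 0 < R :=
    lt_of_lt_of_le (mul_pos (mul_pos hC0 hs0) (Real.sqrt_pos.mpr hL0)) hsep
  have ht : C * Real.sqrt L ≤ R / s := by
    rw [le_div_iff₀ hs0]
    calc C * Real.sqrt L * s = C * s * Real.sqrt L := by ring
      _ ≤ R := hsep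
  have hsqL : (1:ℝ) / 2 ≤ Real.sqrt L := by
    have h14 : (1:ℝ) / 4 ≤ L := by nlinarith [Real.log_two_gt_d9]
    calc (1:ℝ) / 2 = Real.sqrt (1 / 4) := by
          rw [show (1:ℝ) / 4 = (1 / 2) ^ 2 by norm_num, Real.sqrt_sq (by norm_num)]
      _ ≤ Real.sqrt L := Real.sqrt_le_sqrt h14
  have ht1 : 1 ≤ R / s := le_trans (by nlinarith) ht
  have htM : m * L ≤ (R / s) ^ 2 / 256 := by
    have h1 : (C * Real.sqrt L) ^ 2 ≤ (R / s) ^ 2 :=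
      pow_le_pow_left₀ (by positivity) ht 2
    have h2 : (C * Real.sqrt L) ^ 2 = C ^ 2 * L := by
      rw [mul_pow, Real.sq_sqrt hL0.le]
    nlinarith [hL0.le]
  have hρπ0 : (0:ℝ) ≤ pS / pI := by linarith
  have hρσ0 : (0:ℝ) ≤ sS / sI := by linarith
  have hp : p1 + pj ≤ 2 * (pS / pI) * p1 := by
    have h3 : pS / pI * pI = pS := by field_simp
    have h4 : pS / pI * pI ≤ pS / pI * p1 := mul_le_mul_of_nonneg_left hp1I hρπ0
    have h5 : 1 * p1 ≤ pS / pI * p1 := mul_le_mul_of_nonneg_right hρπ1 hp1.le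
    linarith
  have hA : R / σ ≤ R / sI := div_le_div_of_nonneg_left hR0.le hsI hσI
  have hB : R / sI ≤ sS / sI * (R / s) := by
    rw [div_mul_div_comm, div_le_div_iff₀ hsI (by positivity)]
    nlinarith [mul_nonneg (mul_nonneg (sub_nonneg.2 hsS) hR0.le) hsI.le]
  have hratio : R / σ ≤ sS / sI * (R / s) := hA.trans hB
  have hpow : (R / σ) ^ q ≤ (sS / sI) ^ 4 * (R / s) ^ q := by
    calc (R / σ) ^ q ≤ (sS / sI * (R / s)) ^ q :=
          pow_le_pow_left₀ (by positivity) hratio q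
      _ = (sS / sI) ^ q * (R / s) ^ q := mul_pow _ _ _
      _ ≤ (sS / sI) ^ 4 * (R / s) ^ q :=
          mul_le_mul_of_nonneg_right (pow_le_pow_right₀ hρσ1 hq) (by positivity)
  have hEeq : -R ^ 2 / (128 * s ^ 2) = -((R / s) ^ 2 / 128) := by
    field_simp
  have haux := exp_poly_bound (R / s) (m * L) ht1 htM q hq
  calc (p1 + pj) * (R / σ) ^ q * Real.exp (-R ^ 2 / (128 * s ^ 2))
      ≤ (2 * (pS / pI) * p1) * ((sS / sI) ^ 4 * (R / s) ^ q) *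
          Real.exp (-((R / s) ^ 2 / 128)) := by
        rw [hEeq]
        refine mul_le_mul_of_nonneg_right ?_ (Real.exp_pos _).le
        exact mul_le_mul hp hpow (by positivity) (by positivity)
    _ = (2 * (pS / pI) * p1) * (sS / sI) ^ 4 *
          ((R / s) ^ q * Real.exp (-((R / s) ^ 2 / 128))) := by ring
    _ ≤ (2 * (pS / pI) * p1) * (sS / sI) ^ 4 * (262144 * Real.exp (-(m * L))) := by
        refine mul_le_mul_of_nonneg_left haux ?_
        positivity
    _ = 2 * (pS / pI) * p1 * (sS / sI) ^ 4 * (262144 * Real.exp (-(m * L))) := by ring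

/-- **Lemma: higher-order summed weight-error bounds.**
Under the separation `‖μ_i* − μ_j*‖ ≥ C (σ_i* ∨ σ_j*) √(log k + log(ρ_σ ρ_π))` for all
`i ≠ j` (with a large enough universal constant `C ≥ 128`), for each `q ∈ {0,1,2,3,4}` both
`Σ_{j≠1} (π_1* + π_j*) (R_{j1}*/σ_1*)^q exp(−(R_{j1}*)²/(128 (σ_1* ∨ σ_j*)²)) ≤ c_q π_1*`
and the analogous sum with `σ_j*` in place of `σ_1*` hold, with constants `c_q` that can be
made arbitrarily small by taking `C` large enough. -/
theorem sum_pnorm_error_bounds (cq : ℝ) (hcq : 0 < cq) :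
    ∃ C : ℝ, 128 ≤ C ∧
    ∀ (d k : ℕ), 1 ≤ d → 2 ≤ k →
    ∀ (ps : Fin k → ℝ) (μs : Fin k → EuclideanSpace ℝ (Fin d)) (σs : Fin k → ℝ),
    (∀ i, 0 < ps i) → (∑ i, ps i = 1) → (∀ i, 0 < σs i) →
    (∀ i j, i ≠ j →
      C * max (σs i) (σs j) *
          Real.sqrt (Real.log k + Real.log (finSup σs / finInf σs * (finSup ps / finInf ps)))
        ≤ ‖μs i - μs j‖) →
    ∀ one : Fin k, (one : ℕ) = 0 →
    ∀ q ∈ ({0, 1, 2, 3, 4} : Finset ℕ),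
      (∑ j ∈ Finset.univ.erase one,
          (ps one + ps j) * (‖μs j - μs one‖ / σs one) ^ q *
            Real.exp (-‖μs j - μs one‖ ^ 2 / (128 * max (σs one) (σs j) ^ 2))
        ≤ cq * ps one) ∧
      ∑ j ∈ Finset.univ.erase one,
          (ps one + ps j) * (‖μs j - μs one‖ / σs j) ^ q *
            Real.exp (-‖μs j - μs one‖ ^ 2 / (128 * max (σs one) (σs j) ^ 2))
        ≤ cq * ps one := by
  refine ⟨Cval cq, Cval_ge cq, ?_⟩
  intro d k hd hk ps μs σs hps hsum hσs hsep one hone q hq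
  have hq4 : q ≤ 4 := by
    simp only [Finset.mem_insert, Finset.mem_singleton] at hq
    omega
  haveI : Nonempty (Fin k) := ⟨⟨0, by omega⟩⟩
  have hk0 : (0:ℝ) < (k:ℝ) := by exact_mod_cast (by omega : 0 < k)
  have hk1 : (1:ℝ) ≤ (k:ℝ) := by exact_mod_cast (by omega : 1 ≤ k)
  obtain ⟨sS, hsS_def⟩ : ∃ x, finSup σs = x := ⟨_, rfl⟩
  obtain ⟨sI, hsI_def⟩ : ∃ x, finInf σs = x := ⟨_, rfl⟩
  obtain ⟨pS, hpS_def⟩ : ∃ x, finSup ps = x := ⟨_, rfl⟩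
  obtain ⟨pI, hpI_def⟩ : ∃ x, finInf ps = x := ⟨_, rfl⟩
  rw [hsS_def, hsI_def, hpS_def, hpI_def] at hsep
  have hsI_le : ∀ i, sI ≤ σs i := by
    rw [← hsI_def]; exact fun i => ciInf_le (Set.Finite.bddBelow (Set.finite_range σs)) i
  have hsS_ge : ∀ i, σs i ≤ sS := by
    rw [← hsS_def]; exact fun i => le_ciSup (Set.Finite.bddAbove (Set.finite_range σs)) i
  have hpI_le : ∀ i, pI ≤ ps i := by
    rw [← hpI_def]; exact fun i => ciInf_le (Set.Finite.bddBelow (Set.finite_range ps)) i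
  have hpS_ge : ∀ i, ps i ≤ pS := by
    rw [← hpS_def]; exact fun i => le_ciSup (Set.Finite.bddAbove (Set.finite_range ps)) i
  have hsI : 0 < sI := by
    obtain ⟨i0, hi0⟩ := Finite.exists_min σs
    rw [← hsI_def]
    exact lt_of_lt_of_le (hσs i0) (le_ciInf hi0)
  have hpI : 0 < pI := by
    obtain ⟨i0, hi0⟩ := Finite.exists_min ps
    rw [← hpI_def]
    exact lt_of_lt_of_le (hps i0) (le_ciInf hi0)
  have hρσ1 : 1 ≤ sS / sI := (one_le_div hsI).mpr (le_trans (hsI_le one) (hsS_ge one))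
  have hρπ1 : 1 ≤ pS / pI := (one_le_div hpI).mpr (le_trans (hpI_le one) (hpS_ge one))
  have hρσ0 : (0:ℝ) ≤ sS / sI := le_trans zero_le_one hρσ1
  have hρπ0 : (0:ℝ) ≤ pS / pI := le_trans zero_le_one hρπ1
  obtain ⟨L, hL_def⟩ : ∃ x, Real.log (k:ℝ) + Real.log (sS / sI * (pS / pI)) = x := ⟨_, rfl⟩
  rw [hL_def] at hsep
  have hρρ1 : (1:ℝ) ≤ sS / sI * (pS / pI) := by nlinarith
  have hL2 : Real.log 2 ≤ L := by
    rw [← hL_def]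
    have h1 : Real.log 2 ≤ Real.log (k:ℝ) :=
      Real.log_le_log (by norm_num) (by exact_mod_cast hk)
    have h2 : 0 ≤ Real.log (sS / sI * (pS / pI)) := Real.log_nonneg hρρ1
    linarith
  have hexpL : Real.exp L = (k:ℝ) * (sS / sI * (pS / pI)) := by
    rw [← hL_def, Real.exp_add, Real.exp_log hk0, Real.exp_log (by linarith)]
  have hkL : (k:ℝ) ≤ Real.exp L := by
    rw [hexpL]
    nlinarith [mul_le_mul_of_nonneg_left hρρ1 hk0.le]
  have hρπL : pS / pI ≤ Real.exp L := by
    rw [hexpL]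
    have h1 : (1:ℝ) ≤ (k:ℝ) * (sS / sI) := by nlinarith
    nlinarith [mul_le_mul_of_nonneg_right h1 hρπ0]
  have hρσ4 : (sS / sI) ^ 4 ≤ Real.exp (4 * L) := by
    have hρσL : sS / sI ≤ Real.exp L := by
      rw [hexpL]
      have h1 : (1:ℝ) ≤ (k:ℝ) * (pS / pI) := by nlinarith
      nlinarith [mul_le_mul_of_nonneg_right h1 hρσ0]
    calc (sS / sI) ^ 4 ≤ Real.exp L ^ 4 := pow_le_pow_left₀ hρσ0 hρσL 4
      _ = Real.exp (4 * L) := by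
          rw [show (4:ℝ) * L = L + (L + (L + L)) by ring, Real.exp_add, Real.exp_add,
            Real.exp_add]
          ring
  have hfin := final_bound cq hcq L hL2
  have main : ∀ σf : Fin k → ℝ, (∀ j, σf j = σs one ∨ σf j = σs j) →
      ∑ j ∈ Finset.univ.erase one,
          (ps one + ps j) * (‖μs j - μs one‖ / σf j) ^ q *
            Real.exp (-‖μs j - μs one‖ ^ 2 / (128 * max (σs one) (σs j) ^ 2))
        ≤ cq * ps one := by
    intro σf hσf
    have hterm : ∀ j ∈ Finset.univ.erase one,
        (ps one + ps j) * (‖μs j - μs one‖ / σf j) ^ q *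
          Real.exp (-‖μs j - μs one‖ ^ 2 / (128 * max (σs one) (σs j) ^ 2))
        ≤ 2 * (pS / pI) * ps one * (sS / sI) ^ 4 *
            (262144 * Real.exp (-(mval cq * L))) := by
      intro j hj
      have hjone : j ≠ one := (Finset.mem_erase.mp hj).1
      have hσI : sI ≤ σf j := by
        rcases hσf j with h | h <;> rw [h] <;> exact hsI_le _
      have hsep' : Cval cq * max (σs one) (σs j) * Real.sqrt L ≤ ‖μs j - μs one‖ := by
        have h := hsep j one hjone
        rwa [max_comm] at h
      exact per_term (Cval cq) (mval cq) L sI sS pI pS (ps one) (ps j) (σf j)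
        (max (σs one) (σs j)) ‖μs j - μs one‖ q (Cval_ge cq) (Cval_sq cq) (mval_ge cq)
        hL2 hsI hpI hσI (lt_of_lt_of_le (hσs one) (le_max_left _ _))
        (max_le (hsS_ge one) (hsS_ge j)) (hpI_le one) (hpS_ge j) (hps one)
        hρσ1 hρπ1 hsep' hq4
    have hQ0 : 0 ≤ 2 * (pS / pI) * ps one * (sS / sI) ^ 4 *
        (262144 * Real.exp (-(mval cq * L))) := by
      have h1 := (hps one).le
      positivity
    have hsum1 := Finset.sum_le_card_nsmul _ _ _ hterm
    rw [nsmul_eq_mul] at hsum1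
    have hcard : ((Finset.univ.erase one).card : ℝ) ≤ (k:ℝ) := by
      have h1 : (Finset.univ.erase one).card ≤ k := by
        calc (Finset.univ.erase one).card ≤ (Finset.univ : Finset (Fin k)).card :=
              Finset.card_erase_le
          _ = k := by simp
      exact_mod_cast h1
    have c1 : 2 * (pS / pI) * ps one * (sS / sI) ^ 4
        ≤ 2 * Real.exp L * ps one * Real.exp (4 * L) := by
      have b1 : 2 * (pS / pI) * ps one ≤ 2 * Real.exp L * ps one := by
        have h2 : 2 * (pS / pI) ≤ 2 * Real.exp L := by linarith
        exact mul_le_mul_of_nonneg_right h2 (hps one).le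
      exact mul_le_mul b1 hρσ4 (pow_nonneg hρσ0 4) (mul_nonneg (by positivity) (hps one).le)
    calc ∑ j ∈ Finset.univ.erase one,
          (ps one + ps j) * (‖μs j - μs one‖ / σf j) ^ q *
            Real.exp (-‖μs j - μs one‖ ^ 2 / (128 * max (σs one) (σs j) ^ 2))
        ≤ ((Finset.univ.erase one).card : ℝ) *
            (2 * (pS / pI) * ps one * (sS / sI) ^ 4 *
              (262144 * Real.exp (-(mval cq * L)))) := hsum1
      _ ≤ (k:ℝ) * (2 * (pS / pI) * ps one * (sS / sI) ^ 4 *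
              (262144 * Real.exp (-(mval cq * L)))) :=
          mul_le_mul_of_nonneg_right hcard hQ0
      _ ≤ Real.exp L * (2 * Real.exp L * ps one * Real.exp (4 * L) *
            (262144 * Real.exp (-(mval cq * L)))) := by
          refine mul_le_mul hkL ?_ hQ0 (Real.exp_pos _).le
          exact mul_le_mul_of_nonneg_right c1 (by positivity)
      _ = 524288 * Real.exp ((6 - mval cq) * L) * ps one := by
          rw [show (6 - mval cq) * L = L + (L + (4 * L + -(mval cq * L))) by ring,
            Real.exp_add, Real.exp_add, Real.exp_add]
          ring
      _ ≤ cq * ps one := mul_le_mul_of_nonneg_right hfin (hps one).le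
  constructor
  · simpa using main (fun _ => σs one) (fun j => Or.inl rfl)
  · exact main σs (fun j => Or.inr rfl)
end
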